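/- Let Q₁, Q₂, H₁, H₂ be bounded operators on a complex Hilbert space satisfying the N=1² algebra: {Q_i, Q_i†} = 2H_i for i ∈ {1,2}, {Q_i, Q_j†} = 0 for i ≠ j, and {Q_i, Q_j} = 0 for all i, j. Then H₁ and H₂ commute: [H₁, H₂] = 0. -/

import Mathlib

set_option maxHeartbeats 1000000


open ContinuousLinearMap

/-- In the N=1² algebra, the two Hamiltonians commute. -/
theorem n1sq_hamiltonians_commute
    {E : Type*} [NormedAddCommGroup E] [InnerProductSpace ℂ E] [CompleteSpace E]
    (Q₁ Q₂ H₁ H₂ : E →L[ℂ] E)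
    (h11 : Q₁ * adjoint Q₁ + adjoint Q₁ * Q₁ = (2 : ℂ) • H₁)
    (h22 : Q₂ * adjoint Q₂ + adjoint Q₂ * Q₂ = (2 : ℂ) • H₂)
    (h12 : Q₁ * adjoint Q₂ + adjoint Q₂ * Q₁ = 0)
    (h21 : Q₂ * adjoint Q₁ + adjoint Q₁ * Q₂ = 0)
    (hnil : ∀ i j : Fin 2, (![Q₁, Q₂] i) * (![Q₁, Q₂] j)
        + (![Q₁, Q₂] j) * (![Q₁, Q₂] i) = 0) :
    H₁ * H₂ - H₂ * H₁ = 0 := by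
  have hq := hnil 0 1
  simp only [Matrix.cons_val_zero, Matrix.cons_val_one, Matrix.head_cons] at hq
  have e1 : Q₁ * Q₂ = -(Q₂ * Q₁) := eq_neg_of_add_eq_zero_left hq
  have e2 : adjoint Q₁ * Q₂ = -(Q₂ * adjoint Q₁) := eq_neg_of_add_eq_zero_left (by
    rw [add_comm]; exact h21)
  have e3 : Q₁ * adjoint Q₂ = -(adjoint Q₂ * Q₁) := eq_neg_of_add_eq_zero_left h12
  have e4 : adjoint Q₁ * adjoint Q₂ = -(adjoint Q₂ * adjoint Q₁) :=
    eq_neg_of_add_eq_zero_left (by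
      have := congrArg star hq
      simpa [star_eq_adjoint, star_mul, add_comm] using this)
  -- 2H₁ commutes with Q₂
  have c1 : ((2:ℂ) • H₁) * Q₂ = Q₂ * ((2:ℂ) • H₁) := by
    rw [← h11]
    calc (Q₁ * adjoint Q₁ + adjoint Q₁ * Q₁) * Q₂
        = Q₁ * (adjoint Q₁ * Q₂) + adjoint Q₁ * (Q₁ * Q₂) := by simp only [mul_add, add_mul, mul_neg, neg_mul, mul_assoc, sub_eq_add_neg, neg_neg]
      _ = Q₁ * (-(Q₂ * adjoint Q₁)) + adjoint Q₁ * (-(Q₂ * Q₁)) := by rw [e2, e1]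
      _ = -((Q₁ * Q₂) * adjoint Q₁) - (adjoint Q₁ * Q₂) * Q₁ := by simp only [mul_add, add_mul, mul_neg, neg_mul, mul_assoc, sub_eq_add_neg, neg_neg]
      _ = -((-(Q₂ * Q₁)) * adjoint Q₁) - (-(Q₂ * adjoint Q₁)) * Q₁ := by rw [e1, e2]
      _ = Q₂ * (Q₁ * adjoint Q₁ + adjoint Q₁ * Q₁) := by simp only [mul_add, add_mul, mul_neg, neg_mul, mul_assoc, sub_eq_add_neg, neg_neg]
  -- 2H₁ commutes with adjoint Q₂
  have c2 : ((2:ℂ) • H₁) * adjoint Q₂ = adjoint Q₂ * ((2:ℂ) • H₁) := by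
    rw [← h11]
    calc (Q₁ * adjoint Q₁ + adjoint Q₁ * Q₁) * adjoint Q₂
        = Q₁ * (adjoint Q₁ * adjoint Q₂) + adjoint Q₁ * (Q₁ * adjoint Q₂) := by simp only [mul_add, add_mul, mul_neg, neg_mul, mul_assoc, sub_eq_add_neg, neg_neg]
      _ = Q₁ * (-(adjoint Q₂ * adjoint Q₁)) + adjoint Q₁ * (-(adjoint Q₂ * Q₁)) := by
          rw [e4, e3]
      _ = -((Q₁ * adjoint Q₂) * adjoint Q₁) - (adjoint Q₁ * adjoint Q₂) * Q₁ := by simp only [mul_add, add_mul, mul_neg, neg_mul, mul_assoc, sub_eq_add_neg, neg_neg]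
      _ = -((-(adjoint Q₂ * Q₁)) * adjoint Q₁) - (-(adjoint Q₂ * adjoint Q₁)) * Q₁ := by
          rw [e3, e4]
      _ = adjoint Q₂ * (Q₁ * adjoint Q₁ + adjoint Q₁ * Q₁) := by simp only [mul_add, add_mul, mul_neg, neg_mul, mul_assoc, sub_eq_add_neg, neg_neg]
  -- hence 2H₁ commutes with 2H₂
  have c3 : ((2:ℂ) • H₁) * ((2:ℂ) • H₂) = ((2:ℂ) • H₂) * ((2:ℂ) • H₁) := by
    rw [← h22]
    calc ((2:ℂ) • H₁) * (Q₂ * adjoint Q₂ + adjoint Q₂ * Q₂)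
        = (((2:ℂ) • H₁) * Q₂) * adjoint Q₂ + (((2:ℂ) • H₁) * adjoint Q₂) * Q₂ := by
          simp only [mul_add, add_mul, mul_neg, neg_mul, mul_assoc, sub_eq_add_neg, neg_neg]
      _ = (Q₂ * ((2:ℂ) • H₁)) * adjoint Q₂ + (adjoint Q₂ * ((2:ℂ) • H₁)) * Q₂ := by
          rw [c1, c2]
      _ = Q₂ * (((2:ℂ) • H₁) * adjoint Q₂) + adjoint Q₂ * (((2:ℂ) • H₁) * Q₂) := by
          simp only [mul_add, add_mul, mul_neg, neg_mul, mul_assoc, sub_eq_add_neg, neg_neg]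
      _ = Q₂ * (adjoint Q₂ * ((2:ℂ) • H₁)) + adjoint Q₂ * (Q₂ * ((2:ℂ) • H₁)) := by
          rw [c1, c2]
      _ = (Q₂ * adjoint Q₂ + adjoint Q₂ * Q₂) * ((2:ℂ) • H₁) := by simp only [mul_add, add_mul, mul_neg, neg_mul, mul_assoc, sub_eq_add_neg, neg_neg]
  have c4 : (4:ℂ) • (H₁ * H₂) = (4:ℂ) • (H₂ * H₁) := by
    have h := c3
    rw [smul_mul_assoc, smul_mul_assoc, mul_smul_comm, mul_smul_comm,
      smul_smul, smul_smul] at h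
    norm_num at h
    rw [h]
  have := smul_right_injective (E →L[ℂ] E) (by norm_num : (4:ℂ) ≠ 0) c4
  rw [this, sub_self]
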